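/- The 10×10 symmetric integer matrix Q_y given in Section 3.2 of the paper (with diagonal entries 6 and off-diagonal entries ±1 or ±6 as specified) is positive semidefinite, and its kernel is 4-dimensional, spanned by the coordinate vectors of q₁ = y₀²-y₃², q₂ = y₁²-y₃², q₃ = y₂²-y₃², q₄ = -y₀²-y₀y₁-y₀y₂+y₀y₃-y₁y₂+y₁y₃+y₂y₃ in the monomial basis {y₀², y₀y₁, y₀y₂, y₀y₃, y₁², y₁y₂, y₁y₃, y₂², y₂y₃, y₃²}. -/

import Mathlib

/-- The 10×10 integer matrix Q_y of Section 3.2, as a real matrix. -/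
def Qy : Matrix (Fin 10) (Fin 10) ℝ :=
  !![6, -1, -1, 1, 6, -1, 1, 6, 1, 6;
     -1, 6, -1, 1, -1, -1, 1, -1, 1, -1;
     -1, -1, 6, 1, -1, -1, 1, -1, 1, -1;
     1, 1, 1, 6, 1, 1, -1, 1, -1, 1;
     6, -1, -1, 1, 6, -1, 1, 6, 1, 6;
     -1, -1, -1, 1, -1, 6, 1, -1, 1, -1;
     1, 1, 1, -1, 1, 1, 6, 1, -1, 1;
     6, -1, -1, 1, 6, -1, 1, 6, 1, 6;
     1, 1, 1, -1, 1, 1, -1, 1, 6, 1;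
     6, -1, -1, 1, 6, -1, 1, 6, 1, 6]

section aux

variable {α : Type*} (a₀ a₁ a₂ a₃ a₄ a₅ a₆ a₇ a₈ a₉ : α)

lemma cv2' : ![a₀, a₁, a₂, a₃, a₄, a₅, a₆, a₇, a₈, a₉] 2 = a₂ := rfl
lemma cv3' : ![a₀, a₁, a₂, a₃, a₄, a₅, a₆, a₇, a₈, a₉] 3 = a₃ := rfl
lemma cv4' : ![a₀, a₁, a₂, a₃, a₄, a₅, a₆, a₇, a₈, a₉] 4 = a₄ := rfl
lemma cv5' : ![a₀, a₁, a₂, a₃, a₄, a₅, a₆, a₇, a₈, a₉] 5 = a₅ := rfl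
lemma cv6' : ![a₀, a₁, a₂, a₃, a₄, a₅, a₆, a₇, a₈, a₉] 6 = a₆ := rfl
lemma cv7' : ![a₀, a₁, a₂, a₃, a₄, a₅, a₆, a₇, a₈, a₉] 7 = a₇ := rfl
lemma cv8' : ![a₀, a₁, a₂, a₃, a₄, a₅, a₆, a₇, a₈, a₉] 8 = a₈ := rfl
lemma cv9' : ![a₀, a₁, a₂, a₃, a₄, a₅, a₆, a₇, a₈, a₉] 9 = a₉ := rfl

end aux

open Matrix in
private lemma Qy_psd : Qy.PosSemidef := by
  rw [Matrix.posSemidef_iff_dotProduct_mulVec]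
  constructor
  · show Qyᴴ = Qy
    ext i j
    fin_cases i <;> fin_cases j <;> rfl
  · intro x
    have h : star x ⬝ᵥ Qy.mulVec x =
        (1/60) * (10*(6*x 0 - x 1 - x 2 + x 3 + 6*x 4 - x 5 + x 6 + 6*x 7 + x 8 + 6*x 9)^2
        + 14*(5*x 1 - x 2 + x 3 - x 5 + x 6 + x 8)^2
        + 21*(4*x 2 + x 3 - x 5 + x 6 + x 8)^2
        + 35*(3*x 3 + x 5 - x 6 - x 8)^2
        + 70*(2*x 5 + x 6 + x 8)^2
        + 210*(x 6 - x 8)^2) := by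
      simp only [Qy, dotProduct, Matrix.mulVec, Fin.sum_univ_succ, Fin.sum_univ_zero,
        Matrix.cons_val', Matrix.cons_val_zero, Matrix.cons_val_succ, Matrix.empty_val',
        Matrix.cons_val_fin_one, Matrix.head_cons, Matrix.head_fin_const, Matrix.of_apply,
        Pi.star_apply, star_trivial, add_zero]
      norm_num [Fin.succ,
        show ((⟨2, by norm_num⟩ : Fin 10) = 2) from rfl, show ((⟨3, by norm_num⟩ : Fin 10) = 3) from rfl,
        show ((⟨4, by norm_num⟩ : Fin 10) = 4) from rfl, show ((⟨5, by norm_num⟩ : Fin 10) = 5) from rfl,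
        show ((⟨6, by norm_num⟩ : Fin 10) = 6) from rfl, show ((⟨7, by norm_num⟩ : Fin 10) = 7) from rfl,
        show ((⟨8, by norm_num⟩ : Fin 10) = 8) from rfl, show ((⟨9, by norm_num⟩ : Fin 10) = 9) from rfl]
      ring
    rw [h]
    positivity

private lemma Qy_mem_span (x : Fin 10 → ℝ) (hx : Qy.mulVec x = 0) :
    x = (x 0 + x 8) • ![1, 0, 0, 0, 0, 0, 0, 0, 0, -1]
      + x 4 • ![0, 0, 0, 0, 1, 0, 0, 0, 0, -1]
      + x 7 • ![0, 0, 0, 0, 0, 0, 0, 1, 0, -1]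
      + x 8 • ![-1, -1, -1, 1, 0, -1, 1, 0, 1, 0] := by
  have e0 := congrFun hx 0
  have e1 := congrFun hx 1
  have e2 := congrFun hx ((0 : Fin 8).succ.succ)
  have e3 := congrFun hx ((0 : Fin 7).succ.succ.succ)
  have e5 := congrFun hx ((0 : Fin 5).succ.succ.succ.succ.succ)
  have e6 := congrFun hx ((0 : Fin 4).succ.succ.succ.succ.succ.succ)
  simp only [Qy, Matrix.mulVec, dotProduct, Fin.sum_univ_succ, Fin.sum_univ_zero,
    Matrix.cons_val', Matrix.cons_val_zero, Matrix.cons_val_succ, Matrix.empty_val',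
    Matrix.cons_val_fin_one, Matrix.head_cons, Matrix.head_fin_const, Matrix.of_apply,
    Pi.zero_apply, add_zero] at e0 e1 e2 e3 e5 e6
  norm_num [Fin.succ,
    show ((⟨2, by norm_num⟩ : Fin 10) = 2) from rfl, show ((⟨3, by norm_num⟩ : Fin 10) = 3) from rfl,
    show ((⟨4, by norm_num⟩ : Fin 10) = 4) from rfl, show ((⟨5, by norm_num⟩ : Fin 10) = 5) from rfl,
    show ((⟨6, by norm_num⟩ : Fin 10) = 6) from rfl, show ((⟨7, by norm_num⟩ : Fin 10) = 7) from rfl,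
    show ((⟨8, by norm_num⟩ : Fin 10) = 8) from rfl,
    show ((⟨9, by norm_num⟩ : Fin 10) = 9) from rfl] at e0 e1 e2 e3 e5 e6
  funext i
  fin_cases i <;>
    (simp only [Pi.add_apply, Pi.smul_apply, smul_eq_mul]
     norm_num [cv2', cv3', cv4', cv5', cv6', cv7', cv8', cv9',
       show ((⟨2, by norm_num⟩ : Fin 10) = 2) from rfl, show ((⟨3, by norm_num⟩ : Fin 10) = 3) from rfl,
       show ((⟨4, by norm_num⟩ : Fin 10) = 4) from rfl, show ((⟨5, by norm_num⟩ : Fin 10) = 5) from rfl,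
       show ((⟨6, by norm_num⟩ : Fin 10) = 6) from rfl, show ((⟨7, by norm_num⟩ : Fin 10) = 7) from rfl,
       show ((⟨8, by norm_num⟩ : Fin 10) = 8) from rfl,
       show ((⟨9, by norm_num⟩ : Fin 10) = 9) from rfl]) <;>
    linarith

private lemma Qy_kills : ∀ v ∈ ({![1, 0, 0, 0, 0, 0, 0, 0, 0, -1],
        ![0, 0, 0, 0, 1, 0, 0, 0, 0, -1],
        ![0, 0, 0, 0, 0, 0, 0, 1, 0, -1],
        ![-1, -1, -1, 1, 0, -1, 1, 0, 1, 0]} : Set (Fin 10 → ℝ)), Qy.mulVec v = 0 := by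
  intro v hv
  rcases hv with h | h | h | h <;> subst h <;> funext i <;> fin_cases i <;>
    norm_num [Qy, Matrix.mulVec, dotProduct, Fin.sum_univ_succ]

private lemma Qy_ker :
    LinearMap.ker Qy.mulVecLin = Submodule.span ℝ
      ({![1, 0, 0, 0, 0, 0, 0, 0, 0, -1],
        ![0, 0, 0, 0, 1, 0, 0, 0, 0, -1],
        ![0, 0, 0, 0, 0, 0, 0, 1, 0, -1],
        ![-1, -1, -1, 1, 0, -1, 1, 0, 1, 0]} : Set (Fin 10 → ℝ)) := by
  apply le_antisymm
  · intro x hx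
    have hx' : Qy.mulVec x = 0 := hx
    rw [Qy_mem_span x hx']
    refine Submodule.add_mem _ (Submodule.add_mem _ (Submodule.add_mem _ ?_ ?_) ?_) ?_ <;>
      exact Submodule.smul_mem _ _ (Submodule.subset_span (by simp))
  · rw [Submodule.span_le]
    intro v hv
    exact LinearMap.mem_ker.mpr (Qy_kills v hv)

private lemma Qy_indep : LinearIndependent ℝ
    ![(![1, 0, 0, 0, 0, 0, 0, 0, 0, -1] : Fin 10 → ℝ),
      ![0, 0, 0, 0, 1, 0, 0, 0, 0, -1],
      ![0, 0, 0, 0, 0, 0, 0, 1, 0, -1],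
      ![-1, -1, -1, 1, 0, -1, 1, 0, 1, 0]] := by
  let f : (Fin 10 → ℝ) →ₗ[ℝ] (Fin 4 → ℝ) :=
    LinearMap.pi ![((LinearMap.proj (0 : Fin 10) : (Fin 10 → ℝ) →ₗ[ℝ] ℝ) + (LinearMap.proj (8 : Fin 10) : (Fin 10 → ℝ) →ₗ[ℝ] ℝ)),
      (LinearMap.proj 4 : (Fin 10 → ℝ) →ₗ[ℝ] ℝ),
      (LinearMap.proj 7 : (Fin 10 → ℝ) →ₗ[ℝ] ℝ),
      (LinearMap.proj 8 : (Fin 10 → ℝ) →ₗ[ℝ] ℝ)]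
  apply LinearIndependent.of_comp f
  have hcomp : f ∘ ![(![1, 0, 0, 0, 0, 0, 0, 0, 0, -1] : Fin 10 → ℝ),
      ![0, 0, 0, 0, 1, 0, 0, 0, 0, -1],
      ![0, 0, 0, 0, 0, 0, 0, 1, 0, -1],
      ![-1, -1, -1, 1, 0, -1, 1, 0, 1, 0]] = fun i => Pi.single i (1 : ℝ) := by
    funext i j
    fin_cases i <;> fin_cases j <;>
      simp [f, LinearMap.pi_apply, cv5', cv6', cv7', cv8', cv9', Pi.single]
  rw [hcomp]
  have := (Pi.basisFun ℝ (Fin 4)).linearIndependent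
  have heq : ⇑(Pi.basisFun ℝ (Fin 4)) = fun i => Pi.single i (1 : ℝ) := by
    funext i
    simp [Pi.basisFun_apply]
  rwa [heq] at this

/-- Q_y is positive semidefinite and its kernel is the 4-dimensional
space spanned by the coordinate vectors of q₁, q₂, q₃, q₄ in the monomial basis
{y₀², y₀y₁, y₀y₂, y₀y₃, y₁², y₁y₂, y₁y₃, y₂², y₂y₃, y₃²}. -/
theorem Qy_posSemidef_and_kernel :
    Qy.PosSemidef ∧
    LinearMap.ker Qy.mulVecLin = Submodule.span ℝ
      ({![1, 0, 0, 0, 0, 0, 0, 0, 0, -1],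
        ![0, 0, 0, 0, 1, 0, 0, 0, 0, -1],
        ![0, 0, 0, 0, 0, 0, 0, 1, 0, -1],
        ![-1, -1, -1, 1, 0, -1, 1, 0, 1, 0]} : Set (Fin 10 → ℝ)) ∧
    Module.finrank ℝ (LinearMap.ker Qy.mulVecLin) = 4 := by
  refine ⟨Qy_psd, Qy_ker, ?_⟩
  rw [Qy_ker]
  have hset : ({![1, 0, 0, 0, 0, 0, 0, 0, 0, -1],
        ![0, 0, 0, 0, 1, 0, 0, 0, 0, -1],
        ![0, 0, 0, 0, 0, 0, 0, 1, 0, -1],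
        ![-1, -1, -1, 1, 0, -1, 1, 0, 1, 0]} : Set (Fin 10 → ℝ)) =
      Set.range ![(![1, 0, 0, 0, 0, 0, 0, 0, 0, -1] : Fin 10 → ℝ),
        ![0, 0, 0, 0, 1, 0, 0, 0, 0, -1],
        ![0, 0, 0, 0, 0, 0, 0, 1, 0, -1],
        ![-1, -1, -1, 1, 0, -1, 1, 0, 1, 0]] := by
    ext y
    simp [Matrix.range_cons]
    tauto
  rw [hset, finrank_span_eq_card Qy_indep]
  simp
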